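/- Let S be the set of tuples (β_0,…,β_{k−1}) ∈ W^k satisfying the basic equations. Then S is a ℤ_p-submodule of W^k, the projection map S → W sending (β_0,…,β_{k−1}) to β_0 is injective, and its image is exactly the fixed set {x ∈ W : σ^m(x) = x}. In particular S is isomorphic as a ℤ_p-module to the ring of Witt vectors W(𝔽_{p^m}). -/

import Mathlib

noncomputable section

/-- The canonical ring map `ℤ_p → W(K)` for a `ZMod p`-algebra `K`: the identification
`ℤ_p ≅ W(𝔽_p)` followed by the functorial map `W(𝔽_p) → W(K)`, recorded as an algebra
structure. -/
instance padicIntAlgebraWitt (p : ℕ) [Fact p.Prime] (K : Type*) [CommRing K]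
    [Algebra (ZMod p) K] : Algebra ℤ_[p] (WittVector p K) :=
  ((WittVector.map (algebraMap (ZMod p) K)).comp
    (WittVector.equiv p).symm.toRingHom).toAlgebra

/-- The `m`-th power `σ^m` of the Witt vector Frobenius, as a ring homomorphism. -/
def frobPow (p : ℕ) [Fact p.Prime] (K : Type*) [CommRing K] : ℕ → (WittVector p K →+* WittVector p K)
  | 0 => RingHom.id _
  | m + 1 => WittVector.frobenius.comp (frobPow p K m)

/-- The alternating sum `e_i − e_{i+1} + e_{i+2} − ⋯ ± e_j`. -/
def altSum (e : ℕ → ℕ) (i j : ℕ) : ℤ :=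
  ∑ ℓ ∈ Finset.Icc i j, (-1 : ℤ) ^ (ℓ - i) * (e ℓ : ℤ)

/-- The basic equations for a tuple `(β_0, …, β_(k−1))` of Witt vectors (with the cyclic
convention `β_k = β_0`, realized by the wrap-around addition of `Fin k` with
`k = k' + 1`): `p^(e (2j−1)) · σ^(e (2j−1) + e (2j)) (β_(j−1)) = p^(e (2j)) · β_j` for
`j = 1, …, k`. -/
def BasicEq (p r k' : ℕ) [Fact p.Prime] (e : ℕ → ℕ)
    (β : Fin (k' + 1) → WittVector p (GaloisField p r)) : Prop :=
  ∀ j : Fin (k' + 1),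
    (p : WittVector p (GaloisField p r)) ^ (e (2 * (j : ℕ) + 1)) *
        frobPow p (GaloisField p r) (e (2 * (j : ℕ) + 1) + e (2 * (j : ℕ) + 2)) (β j)
      = (p : WittVector p (GaloisField p r)) ^ (e (2 * (j : ℕ) + 2)) * β (j + 1)

namespace BasicEqAux

/-- The generic form of the basic equations, over an arbitrary coefficient ring. -/
def BE (p k' : ℕ) [Fact p.Prime] (K : Type*) [CommRing K] (e : ℕ → ℕ)
    (β : Fin (k' + 1) → WittVector p K) : Prop :=
  ∀ j : Fin (k' + 1),
    (p : WittVector p K) ^ (e (2 * (j : ℕ) + 1)) *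
        frobPow p K (e (2 * (j : ℕ) + 1) + e (2 * (j : ℕ) + 2)) (β j)
      = (p : WittVector p K) ^ (e (2 * (j : ℕ) + 2)) * β (j + 1)

variable (p : ℕ) [Fact p.Prime]

section CharP

variable (K : Type*) [CommRing K] [CharP K p]

lemma frobPow_coeff (s n : ℕ) (x : WittVector p K) :
    (frobPow p K s x).coeff n = x.coeff n ^ p ^ s := by
  induction s with
  | zero => simp [frobPow]
  | succ s ih =>
      show ((WittVector.frobenius.comp (frobPow p K s)) x).coeff n = _
      rw [RingHom.comp_apply, WittVector.coeff_frobenius_charP, ih, ← pow_mul, pow_succ]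

lemma frobPow_add (a b : ℕ) (x : WittVector p K) :
    frobPow p K (a + b) x = frobPow p K a (frobPow p K b x) := by
  apply WittVector.ext
  intro n
  rw [frobPow_coeff, frobPow_coeff, frobPow_coeff, ← pow_mul, pow_add, mul_comm]

variable [Algebra (ZMod p) K]

omit [CharP K p] in
lemma wv_algebraMap_coeff (z : ℤ_[p]) (n : ℕ) :
    (algebraMap ℤ_[p] (WittVector p K) z).coeff n
      = algebraMap (ZMod p) K (((WittVector.equiv p).symm z).coeff n) :=
  WittVector.map_coeff _ _ _

lemma frobPow_algebraMap (s : ℕ) (z : ℤ_[p]) :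
    frobPow p K s (algebraMap ℤ_[p] (WittVector p K) z)
      = algebraMap ℤ_[p] (WittVector p K) z := by
  apply WittVector.ext
  intro n
  rw [frobPow_coeff, wv_algebraMap_coeff, ← map_pow, ZMod.pow_card_pow]

lemma frobPow_smul (s : ℕ) (z : ℤ_[p]) (x : WittVector p K) :
    frobPow p K s (z • x) = z • frobPow p K s x := by
  rw [Algebra.smul_def, map_mul, frobPow_algebraMap, Algebra.smul_def]

end CharP

/-- arithmetic: `altSum` over the empty interval. -/
lemma altSum_zero (e : ℕ → ℕ) : altSum e 1 0 = 0 := by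
  rw [altSum, Finset.Icc_eq_empty (by omega), Finset.sum_empty]

lemma altSum_succ (e : ℕ → ℕ) (ℓ : ℕ) :
    altSum e 1 (ℓ + 1) = altSum e 1 ℓ + (-1 : ℤ) ^ ℓ * e (ℓ + 1) := by
  unfold altSum
  rw [Finset.sum_Icc_succ_top (by omega)]
  simp

lemma expStep (e : ℕ → ℕ) (k' : ℕ)
    (hA : ∀ ℓ, 1 ≤ ℓ → ℓ ≤ 2 * (k' + 1) → 0 ≤ altSum e 1 ℓ) (j : ℕ) (hj : j ≤ k') :
    e (2 * j + 1) + (altSum e 1 (2 * j)).toNat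
      = e (2 * j + 2) + (altSum e 1 (2 * (j + 1))).toNat := by
  have h1 : altSum e 1 (2 * j + 1) = altSum e 1 (2 * j) + e (2 * j + 1) := by
    rw [altSum_succ, Even.neg_one_pow (even_two_mul j), one_mul]
  have h2 : altSum e 1 (2 * (j + 1)) = altSum e 1 (2 * j + 1) - e (2 * j + 2) := by
    rw [show 2 * (j + 1) = (2 * j + 1) + 1 by ring, altSum_succ,
      Odd.neg_one_pow ⟨j, by ring⟩]
    ring_nf
  have h0 : 0 ≤ altSum e 1 (2 * j) := by
    rcases Nat.eq_zero_or_pos j with rfl | hj0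
    · rw [show 2 * 0 = 0 from rfl, altSum_zero]
    · exact hA _ (by omega) (by omega)
  have h3 : 0 ≤ altSum e 1 (2 * (j + 1)) := hA _ (by omega) (by omega)
  omega

lemma sumStep (e : ℕ → ℕ) (j : ℕ) :
    (∑ i ∈ Finset.Icc 1 (2 * (j + 1)), e i)
      = (e (2 * j + 1) + e (2 * j + 2)) + ∑ i ∈ Finset.Icc 1 (2 * j), e i := by
  rw [show 2 * (j + 1) = (2 * j + 1) + 1 by ring, Finset.sum_Icc_succ_top (by omega),
    Finset.sum_Icc_succ_top (by omega)]
  ring_nf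


/-- the `p`-adic valuation `A_(2n)` exponents, as naturals. -/
def aN (e : ℕ → ℕ) (n : ℕ) : ℕ := (altSum e 1 (2 * n)).toNat

/-- the partial sums `e_1 + ⋯ + e_(2n)`. -/
def sN (e : ℕ → ℕ) (n : ℕ) : ℕ := ∑ i ∈ Finset.Icc 1 (2 * n), e i

lemma aN_zero (e : ℕ → ℕ) : aN e 0 = 0 := by simp [aN, altSum_zero]

lemma sN_zero (e : ℕ → ℕ) : sN e 0 = 0 := by
  simp [sN, Finset.Icc_eq_empty (show ¬(1 : ℕ) ≤ 2 * 0 by omega)]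

lemma expStep' (e : ℕ → ℕ) (k' : ℕ)
    (hA : ∀ ℓ, 1 ≤ ℓ → ℓ ≤ 2 * (k' + 1) → 0 ≤ altSum e 1 ℓ) (j : ℕ) (hj : j ≤ k') :
    e (2 * j + 1) + aN e j = e (2 * j + 2) + aN e (j + 1) :=
  expStep e k' hA j hj

lemma sumStep' (e : ℕ → ℕ) (j : ℕ) :
    sN e (j + 1) = (e (2 * j + 1) + e (2 * j + 2)) + sN e j :=
  sumStep e j

/-- The candidate solution tuple attached to a fixed Witt vector. -/
def gfun (p k' : ℕ) [Fact p.Prime] (K : Type*) [CommRing K] (e : ℕ → ℕ)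
    (x : WittVector p K) : Fin (k' + 1) → WittVector p K :=
  fun j => (p : WittVector p K) ^ (aN e (j : ℕ)) * frobPow p K (sN e (j : ℕ)) x

lemma gfun_apply (p k' : ℕ) [Fact p.Prime] (K : Type*) [CommRing K] (e : ℕ → ℕ)
    (x : WittVector p K) (j : Fin (k' + 1)) :
    gfun p k' K e x j
      = (p : WittVector p K) ^ (aN e (j : ℕ)) * frobPow p K (sN e (j : ℕ)) x := rfl

lemma gfun_zero (p k' : ℕ) [Fact p.Prime] (K : Type*) [CommRing K] (e : ℕ → ℕ)
    (x : WittVector p K) : gfun p k' K e x 0 = x := by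
  rw [gfun_apply]
  simp [aN_zero, sN_zero, frobPow]


lemma fin_mk_zero (k' : ℕ) (h : 0 < k' + 1) : (⟨0, h⟩ : Fin (k' + 1)) = 0 := by
  apply Fin.ext; simp

lemma fin_mk_add_one (k' n : ℕ) (h : n < k') (h1 : n < k' + 1) (h2 : n + 1 < k' + 1) :
    (⟨n, h1⟩ : Fin (k' + 1)) + 1 = ⟨n + 1, h2⟩ := by
  apply Fin.ext
  rw [Fin.val_add_one_of_lt (by rw [Fin.lt_def]; simpa using h)]

lemma fin_mk_last_add_one (k' : ℕ) (h : k' < k' + 1) : (⟨k', h⟩ : Fin (k' + 1)) + 1 = 0 := by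
  have : (⟨k', h⟩ : Fin (k' + 1)) = Fin.last k' := rfl
  rw [this, Fin.last_add_one]

/-- The generic main theorem, over an arbitrary domain `K` of characteristic `p`
equipped with an embedding `ι : K' → K` whose range is the fixed subring of the
`m`-th power of the `p`-th power map. -/
theorem exists_submodule_solutions (k' : ℕ) (K : Type*) [CommRing K] [CharP K p]
    [IsDomain K] [Algebra (ZMod p) K]
    (K' : Type*) [CommRing K'] [Algebra (ZMod p) K']
    (e : ℕ → ℕ) (m : ℕ)
    (hA : ∀ ℓ, 1 ≤ ℓ → ℓ ≤ 2 * (k' + 1) → 0 ≤ altSum e 1 ℓ)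
    (hA0 : altSum e 1 (2 * (k' + 1)) = 0)
    (hm : m = ∑ i ∈ Finset.Icc 1 (2 * (k' + 1)), e i)
    (ι : K' →+* K) (hι : Function.Injective ι)
    (hrange : ∀ y : K, y ^ p ^ m = y ↔ ∃ z, ι z = y) :
    ∃ M : Submodule ℤ_[p] (Fin (k' + 1) → WittVector p K),
      (M : Set (Fin (k' + 1) → WittVector p K)) = {β | BE p k' K e β} ∧
      Set.InjOn (fun β : Fin (k' + 1) → WittVector p K => β 0) M ∧
      ((fun β : Fin (k' + 1) → WittVector p K => β 0) '' M
          = {x | frobPow p K m x = x}) ∧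
      Nonempty (M ≃ₗ[ℤ_[p]] WittVector p K') := by
  classical
  have hak : aN e (k' + 1) = 0 := by simp [aN, hA0]
  have hsk : sN e (k' + 1) = m := hm.symm
  -- computation lemma
  have hcomp : ∀ (x : WittVector p K) (A B C D : ℕ),
      (p : WittVector p K) ^ A * frobPow p K B ((p : WittVector p K) ^ C * frobPow p K D x)
        = (p : WittVector p K) ^ (A + C) * frobPow p K (B + D) x := by
    intro x A B C D
    rw [map_mul, map_pow, map_natCast, frobPow_add p K B D, pow_add]
    ring
  have hpne : ∀ n : ℕ, ((p : WittVector p K) ^ n) ≠ 0 :=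
    fun n => pow_ne_zero _ (WittVector.p_nonzero p K)
  -- determination lemma
  have hdet : ∀ β, BE p k' K e β → ∀ (n : ℕ) (hn : n ≤ k'),
      β ⟨n, by omega⟩ = gfun p k' K e (β 0) ⟨n, by omega⟩ := by
    intro β hβ n
    induction n with
    | zero => intro _; rw [fin_mk_zero, gfun_zero]
    | succ n ih =>
        intro hn
        have hkey := hβ ⟨n, by omega⟩
        rw [fin_mk_add_one k' n (by omega) (by omega) (by omega)] at hkey
        rw [ih (by omega)] at hkey
        rw [gfun_apply] at hkey
        simp only [Fin.val_mk] at hkey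
        rw [hcomp, expStep' e k' hA n (by omega), ← sumStep' e n, pow_add, mul_assoc] at hkey
        rw [gfun_apply]
        simp only [Fin.val_mk]
        exact mul_left_cancel₀ (hpne _) hkey.symm
  -- fixed point property
  have hfix : ∀ β, BE p k' K e β → frobPow p K m (β 0) = β 0 := by
    intro β hβ
    have hkey := hβ ⟨k', by omega⟩
    rw [fin_mk_last_add_one] at hkey
    rw [hdet β hβ k' le_rfl] at hkey
    rw [gfun_apply] at hkey
    simp only [Fin.val_mk] at hkey
    rw [hcomp, expStep' e k' hA k' le_rfl, ← sumStep' e k', hak, Nat.add_zero, hsk] at hkey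
    exact mul_left_cancel₀ (hpne (e (2 * k' + 2))) hkey
  -- solutions from fixed points
  have hsol : ∀ x : WittVector p K, frobPow p K m x = x → BE p k' K e (gfun p k' K e x) := by
    intro x hx j
    rcases j with ⟨n, hn⟩
    rw [gfun_apply]
    simp only [Fin.val_mk]
    rw [hcomp]
    rcases Nat.lt_or_ge n k' with h | h
    · rw [fin_mk_add_one k' n h (by omega) (by omega), gfun_apply]
      simp only [Fin.val_mk]
      rw [expStep' e k' hA n (by omega), ← sumStep' e n, pow_add, mul_assoc]
    · have hnk : n = k' := by omega
      subst hnk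
      rw [fin_mk_last_add_one, gfun_zero]
      rw [expStep' e n hA n le_rfl, ← sumStep' e n, hak, Nat.add_zero, hsk, hx]
  -- the submodule
  let M : Submodule ℤ_[p] (Fin (k' + 1) → WittVector p K) :=
  { carrier := {β | BE p k' K e β}
    add_mem' := by
      intro β γ hβ hγ j
      simp only [Pi.add_apply, map_add, mul_add]
      rw [hβ j, hγ j]
    zero_mem' := by
      intro j
      simp
    smul_mem' := by
      intro z β hβ j
      simp only [Pi.smul_apply]
      rw [frobPow_smul, mul_smul_comm, hβ j, mul_smul_comm] }
  have hmem : ∀ β, β ∈ M ↔ BE p k' K e β := fun β => Iff.rfl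
  refine ⟨M, rfl, ?_, ?_, ?_⟩
  · -- injectivity of projection
    intro β hβ γ hγ h
    funext j
    rcases j with ⟨n, hn⟩
    rw [hdet β hβ n (by omega), hdet γ hγ n (by omega)]
    simp only at h
    rw [h]
  · -- image is the fixed set
    ext x
    constructor
    · rintro ⟨β, hβ, rfl⟩
      exact hfix β hβ
    · intro hx
      exact ⟨gfun p k' K e x, hsol x hx, gfun_zero p k' K e x⟩
  · -- the linear equivalence with W(K')
    have hιalg : ι.comp (algebraMap (ZMod p) K') = algebraMap (ZMod p) K :=
      RingHom.ext_zmod _ _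
    haveI : CharP K' p := ι.charP hι p
    have hWι_coeff : ∀ (y : WittVector p K') (n : ℕ),
        (WittVector.map ι y).coeff n = ι (y.coeff n) := fun y n => WittVector.map_coeff ι y n
    have hWι_inj : Function.Injective (WittVector.map ι : WittVector p K' → WittVector p K) :=
      WittVector.map_injective ι hι
    have hWι_fix : ∀ y, frobPow p K m (WittVector.map ι y) = WittVector.map ι y := by
      intro y
      apply WittVector.ext
      intro n
      rw [frobPow_coeff, hWι_coeff]
      exact (hrange _).mpr ⟨y.coeff n, rfl⟩
    have hWι_alg : ∀ z : ℤ_[p],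
        WittVector.map ι (algebraMap ℤ_[p] (WittVector p K') z)
          = algebraMap ℤ_[p] (WittVector p K) z := by
      intro z
      apply WittVector.ext
      intro n
      rw [WittVector.map_coeff, wv_algebraMap_coeff, wv_algebraMap_coeff,
        ← RingHom.comp_apply, hιalg]
    have hWι_smul : ∀ (z : ℤ_[p]) (y : WittVector p K'),
        WittVector.map ι (z • y) = z • WittVector.map ι y := by
      intro z y
      rw [Algebra.smul_def, map_mul, hWι_alg, Algebra.smul_def]
    have hsurj_fix : ∀ x : WittVector p K, frobPow p K m x = x →
        ∃ y, WittVector.map ι y = x := by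
      intro x hx
      have hc : ∀ n, (x.coeff n) ^ p ^ m = x.coeff n := by
        intro n
        have := congrArg (fun v : WittVector p K => v.coeff n) hx
        simpa [frobPow_coeff] using this
      choose z hz using fun n => (hrange (x.coeff n)).mp (hc n)
      refine ⟨WittVector.mk p z, ?_⟩
      apply WittVector.ext
      intro n
      rw [hWι_coeff, WittVector.coeff_mk, hz]
    refine ⟨?_⟩
    have hg_memM : ∀ y : WittVector p K',
        gfun p k' K e (WittVector.map ι y) ∈ M :=
      fun y => (hmem _).mpr (hsol _ (hWι_fix y))
    have hg_add : ∀ x y : WittVector p K,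
        gfun p k' K e (x + y) = gfun p k' K e x + gfun p k' K e y := by
      intro x y
      funext j
      simp only [gfun_apply, Pi.add_apply, map_add, mul_add]
    have hg_smul : ∀ (c : ℤ_[p]) (x : WittVector p K),
        gfun p k' K e (c • x) = c • gfun p k' K e x := by
      intro c x
      funext j
      simp only [gfun_apply, Pi.smul_apply]
      rw [frobPow_smul, mul_smul_comm]
    let L : WittVector p K' →ₗ[ℤ_[p]] M :=
    { toFun := fun y => ⟨gfun p k' K e (WittVector.map ι y), hg_memM y⟩
      map_add' := fun y z => Subtype.ext (by
        show gfun p k' K e (WittVector.map ι (y + z)) = _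
        rw [map_add, hg_add]
        rfl)
      map_smul' := fun c y => Subtype.ext (by
        show gfun p k' K e (WittVector.map ι (c • y)) = _
        rw [hWι_smul, hg_smul]
        rfl) }
    have hLinj : Function.Injective L := by
      intro y₁ y₂ h
      apply hWι_inj
      have := congrArg (fun v : M => (v : Fin (k' + 1) → WittVector p K) 0) h
      simpa [L, gfun_zero] using this
    have hLsurj : Function.Surjective L := by
      rintro ⟨β, hβ⟩
      have hβ' : BE p k' K e β := (hmem β).mp hβ
      obtain ⟨y, hy⟩ := hsurj_fix (β 0) (hfix β hβ')
      refine ⟨y, Subtype.ext ?_⟩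
      show gfun p k' K e (WittVector.map ι y) = β
      rw [hy]
      funext j
      rcases j with ⟨n, hn⟩
      exact (hdet β hβ' n (by omega)).symm
    exact (LinearEquiv.ofBijective L ⟨hLinj, hLsurj⟩).symm

end BasicEqAux

open BasicEqAux Polynomial in
/-- the set `S` of solutions of the basic equations in `W^k` is a
`ℤ_p`-submodule, projection to the coordinate `β_0` is injective on `S`, its image is
exactly the fixed set `{x ∈ W : σ^m(x) = x}`, and `S` is isomorphic as a `ℤ_p`-module
to `W(𝔽_(p^m))`. -/
theorem basic_equations_adic_solutions (p r k' : ℕ) [Fact p.Prime] (hp : Odd p)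
    (hr : 0 < r) (e : ℕ → ℕ)
    (he : ∀ i, 1 ≤ i → i ≤ 2 * (k' + 1) → 0 < e i)
    (hA : ∀ ℓ, 1 ≤ ℓ → ℓ ≤ 2 * (k' + 1) → 0 ≤ altSum e 1 ℓ)
    (hA0 : altSum e 1 (2 * (k' + 1)) = 0)
    (m : ℕ) (hm : m = ∑ i ∈ Finset.Icc 1 (2 * (k' + 1)), e i) (hmr : m ∣ r) :
    ∃ M : Submodule ℤ_[p] (Fin (k' + 1) → WittVector p (GaloisField p r)),
      (M : Set (Fin (k' + 1) → WittVector p (GaloisField p r)))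
          = {β | BasicEq p r k' e β} ∧
      Set.InjOn (fun β : Fin (k' + 1) → WittVector p (GaloisField p r) => β 0) M ∧
      ((fun β : Fin (k' + 1) → WittVector p (GaloisField p r) => β 0) '' M
          = {x | frobPow p (GaloisField p r) m x = x}) ∧
      Nonempty (M ≃ₗ[ℤ_[p]] WittVector p (GaloisField p m)) := by
  classical
  have hp1 : 1 < p := (Fact.out : p.Prime).one_lt
  have hm0 : m ≠ 0 := by
    have h1 : e 1 ≤ ∑ i ∈ Finset.Icc 1 (2 * (k' + 1)), e i :=
      Finset.single_le_sum (f := e) (fun i _ => Nat.zero_le _)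
        (Finset.mem_Icc.mpr ⟨le_refl 1, by omega⟩)
    have := he 1 le_rfl (by omega)
    omega
  -- the embedding of GF(p^m) into GF(p^r) with image the fixed field
  have hemb : ∃ ι : GaloisField p m →+* GaloisField p r,
      Function.Injective ι ∧
      ∀ y : GaloisField p r, y ^ p ^ m = y ↔ ∃ z, ι z = y := by
    set K := GaloisField p r with hK
    have hodd : Odd (p ^ m) := hp.pow
    let F : Subfield K :=
    { carrier := {y : K | y ^ p ^ m = y}
      one_mem' := one_pow _
      mul_mem' := fun {a b} ha hb => by
        simp only [Set.mem_setOf_eq] at *; rw [mul_pow, ha, hb]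
      add_mem' := fun {a b} ha hb => by
        simp only [Set.mem_setOf_eq] at *; rw [add_pow_char_pow, ha, hb]
      zero_mem' := zero_pow (by positivity)
      neg_mem' := fun {a} ha => by
        simp only [Set.mem_setOf_eq] at *; rw [hodd.neg_pow, ha]
      inv_mem' := fun a ha => by
        simp only [Set.mem_setOf_eq] at *; rw [inv_pow, ha] }
    let gpoly : (ZMod p)[X] := X ^ p ^ m - X
    have hgne : gpoly ≠ 0 := FiniteField.X_pow_card_pow_sub_X_ne_zero _ hm0 hp1
    have hsep : gpoly.Separable := galois_poly_separable p (p ^ m) (dvd_pow_self p hm0)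
    have hdvd : gpoly ∣ (X ^ p ^ r - X : (ZMod p)[X]) := by
      have key : ∀ u v : ℕ, u ∣ v → (X ^ u - 1 : (ZMod p)[X]) ∣ X ^ v - 1 := by
        rintro u v ⟨w, rfl⟩
        simpa [pow_mul] using sub_dvd_pow_sub_pow ((X : (ZMod p)[X]) ^ u) 1 w
      have hd : (p ^ m - 1) ∣ (p ^ r - 1) := by
        obtain ⟨t, rfl⟩ := hmr
        simpa [pow_mul] using Nat.sub_dvd_pow_sub_pow (p ^ m) 1 t
      have e1 : (X ^ p ^ m - X : (ZMod p)[X]) = X * (X ^ (p ^ m - 1) - 1) := by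
        rw [mul_sub, mul_one, ← pow_succ']
        congr 2
        have : 0 < p ^ m := by positivity
        omega
      have e2 : (X ^ p ^ r - X : (ZMod p)[X]) = X * (X ^ (p ^ r - 1) - 1) := by
        rw [mul_sub, mul_one, ← pow_succ']
        congr 2
        have : 0 < p ^ r := by positivity
        omega
      rw [show gpoly = X ^ p ^ m - X from rfl, e1, e2]
      exact mul_dvd_mul_left X (key _ _ hd)
    have hsplitsG : Splits ((X ^ p ^ r - X : (ZMod p)[X]).map (algebraMap (ZMod p) K)) :=
      SplittingField.splits _
    have hsplit : Splits (gpoly.map (algebraMap (ZMod p) K)) :=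
      hsplitsG.of_dvd
        (Polynomial.map_ne_zero (FiniteField.X_pow_card_pow_sub_X_ne_zero _ hr.ne' hp1))
        (Polynomial.map_dvd _ hdvd)
    have hcard' : Fintype.card (gpoly.rootSet K) = p ^ m := by
      rw [card_rootSet_eq_natDegree hsep hsplit,
        FiniteField.X_pow_card_pow_sub_X_natDegree_eq _ hm0 hp1]
    have hroot : gpoly.rootSet K = (F : Set K) := by
      ext y
      rw [mem_rootSet_of_ne hgne]
      simp only [gpoly, map_sub, map_pow, aeval_X, sub_eq_zero]
      rfl
    have hFcard : Nat.card F = p ^ m := by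
      rw [← hcard', ← Nat.card_eq_fintype_card]
      exact Nat.card_congr (Equiv.setCongr (by rw [hroot]))
    haveI : CharP F p := F.subtype.charP F.subtype.injective p
    letI : Algebra (ZMod p) F := ZMod.algebra _ p
    let ψ : F ≃ₐ[ZMod p] GaloisField p m := GaloisField.algEquivGaloisField p m hFcard
    let ι : GaloisField p m →+* K := F.subtype.comp ψ.symm.toAlgHom.toRingHom
    refine ⟨ι, ι.injective, fun y => ⟨fun hy => ⟨ψ ⟨y, hy⟩, by simp [ι]⟩, ?_⟩⟩
    rintro ⟨z, rfl⟩
    exact (ψ.symm z).2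
  obtain ⟨ι, hι, hrange⟩ := hemb
  obtain ⟨M, hM, h1, h2, h3⟩ :=
    exists_submodule_solutions p k' (GaloisField p r) (GaloisField p m) e m hA hA0 hm
      ι hι hrange
  exact ⟨M, hM, h1, h2, h3⟩

end
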